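/- arXiv:1007.5337 — 2 statements merged into one kernel-verified Lean document; each statement's English description precedes it below -/
import Mathlib

section
/- Let M : ℝ → Matrix (Fin N) (Fin N) ℂ be continuous and suppose the symmetric real part satisfies ‖(1/2)(M(x) + M(x)*)‖ ≤ εδ for all x ≤ 0, where ε, δ > 0. Then any solution P of the matrix ODE P' = M(x)P - P M(x) on (-∞,0] satisfies ‖P(x)‖_F ≤ ‖P(y)‖_F · exp(2εδ(x - y)) for all y ≤ x ≤ 0, where ‖·‖_F is the Frobenius norm. -/
open Matrix Real

attribute [local instance] Matrix.frobeniusNormedAddCommGroup Matrix.frobeniusNormedRing Matrix.frobeniusNormedSpace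

noncomputable local instance matInner (N : ℕ) : InnerProductSpace ℂ (Matrix (Fin N) (Fin N) ℂ) where
  inner A B := inner ℂ (WithLp.toLp 2 fun i => WithLp.toLp 2 (A i) : PiLp 2 fun _ : Fin N => PiLp 2 fun _ : Fin N => ℂ)
    (WithLp.toLp 2 fun i => WithLp.toLp 2 (B i))
  norm_sq_eq_re_inner A := by
    exact inner_self_eq_norm_sq (𝕜 := ℂ) (WithLp.toLp 2 fun i => WithLp.toLp 2 (A i) : PiLp 2 fun _ : Fin N => PiLp 2 fun _ : Fin N => ℂ) |>.symm
  conj_inner_symm A B := inner_conj_symm _ _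
  add_left A B C := by
    rw [← inner_add_left]; rfl
  smul_left A B r := by
    rw [← inner_smul_left]; rfl


private lemma inner_trace' {N : ℕ} (A B : Matrix (Fin N) (Fin N) ℂ) :
    (inner ℂ A B : ℂ) = Matrix.trace (Aᴴ * B) := by
  simp [inner, Matrix.trace, Matrix.mul_apply, Matrix.conjTranspose_apply, Matrix.diag,
    RCLike.inner_apply, mul_comm]
  rw [Finset.sum_comm]

private lemma conj_inner_comm' {N : ℕ} (A X : Matrix (Fin N) (Fin N) ℂ) :
    (starRingEnd ℂ) (inner ℂ A (X * A - A * X) : ℂ) = inner ℂ A (Xᴴ * A - A * Xᴴ) := by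
  rw [inner_trace', inner_trace']
  have h : (starRingEnd ℂ) (Matrix.trace (Aᴴ * (X * A - A * X)))
      = Matrix.trace ((Aᴴ * (X * A - A * X))ᴴ) := (Matrix.trace_conjTranspose _).symm
  rw [h]
  simp only [Matrix.conjTranspose_mul, Matrix.conjTranspose_sub,
    Matrix.conjTranspose_conjTranspose, Matrix.mul_sub, Matrix.sub_mul, Matrix.trace_sub,
    Matrix.mul_assoc]
  congr 1
  rw [Matrix.trace_mul_comm, Matrix.mul_assoc]

private lemma re_inner_bound' {N : ℕ} (A X : Matrix (Fin N) (Fin N) ℂ) (c : ℝ)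
    (hS : ‖(1 / 2 : ℂ) • (X + Xᴴ)‖ ≤ c) :
    |Complex.re (inner ℂ A (X * A - A * X) : ℂ)| ≤ 2 * c * ‖A‖ ^ 2 := by
  set S : Matrix (Fin N) (Fin N) ℂ := (1 / 2 : ℂ) • (X + Xᴴ) with hSdef
  set z : ℂ := inner ℂ A (X * A - A * X) with hz
  set w : ℂ := inner ℂ A (S * A - A * S) with hw
  have hzw : z + (starRingEnd ℂ) z = 2 * w := by
    rw [hz, hw, conj_inner_comm']
    rw [show S * A - A * S = (1 / 2 : ℂ) • ((X + Xᴴ) * A - A * (X + Xᴴ)) by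
      rw [hSdef]; rw [smul_sub, smul_mul_assoc, mul_smul_comm]]
    rw [inner_smul_right]
    rw [show ((X + Xᴴ) * A - A * (X + Xᴴ)) = (X * A - A * X) + (Xᴴ * A - A * Xᴴ) by
      rw [Matrix.add_mul, Matrix.mul_add]; abel]
    rw [inner_add_right]
    ring
  have hre : Complex.re z = Complex.re w := by
    have := congrArg Complex.re hzw
    simp [Complex.add_re, Complex.conj_re] at this
    linarith
  rw [hre]
  have h1 : |Complex.re w| ≤ ‖w‖ := Complex.abs_re_le_norm w
  have h2 : ‖w‖ ≤ ‖A‖ * ‖S * A - A * S‖ := norm_inner_le_norm A _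
  have h3 : ‖S * A - A * S‖ ≤ ‖S‖ * ‖A‖ + ‖A‖ * ‖S‖ :=
    le_trans (norm_sub_le _ _) (add_le_add (norm_mul_le _ _) (norm_mul_le _ _))
  have hA : (0:ℝ) ≤ ‖A‖ := norm_nonneg _
  have hS0 : (0:ℝ) ≤ ‖S‖ := norm_nonneg _
  nlinarith

/-- Energy (Grönwall) estimate for the commutator ODE
`P' = M P - P M`: if the symmetric real part `(1/2)(M + Mᴴ)` has (Frobenius)
norm at most `ε δ` on `(-∞,0]`, then any solution satisfies
`‖P x‖ ≤ ‖P y‖ exp (2 ε δ (x - y))` for `y ≤ x ≤ 0`. -/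
theorem commutator_ode_growth_bound
    (N : ℕ) (M P : ℝ → Matrix (Fin N) (Fin N) ℂ) (ε δ : ℝ)
    (hε : 0 < ε) (hδ : 0 < δ)
    (hMcont : Continuous M)
    (hRe : ∀ x : ℝ, x ≤ 0 →
      ‖(1 / 2 : ℂ) • (M x + (M x)ᴴ)‖ ≤ ε * δ)
    (hP : ∀ x : ℝ, x ≤ 0 →
      HasDerivAt P (M x * P x - P x * M x) x) :
    ∀ y x : ℝ, y ≤ x → x ≤ 0 →
      ‖P x‖ ≤ ‖P y‖ * Real.exp (2 * ε * δ * (x - y)) := by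
  intro y x hyx hx0
  set c : ℝ := ε * δ with hc
  have hc0 : 0 ≤ c := le_of_lt (mul_pos hε hδ)
  set u : ℝ → ℝ := fun t => Complex.re (inner ℂ (P t) (P t) : ℂ) with hu
  set u' : ℝ → ℝ := fun t =>
    2 * Complex.re (inner ℂ (P t) (M t * P t - P t * M t) : ℂ) with hu'
  have hunorm : ∀ t, u t = ‖P t‖ ^ 2 := fun t => by
    rw [hu]
    exact inner_self_eq_norm_sq (𝕜 := ℂ) (P t)
  have hderiv : ∀ t : ℝ, t ≤ 0 → HasDerivAt u (u' t) t := by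
    intro t ht
    have h1 := HasDerivAt.inner ℂ (hP t ht) (hP t ht)
    have h2 := (Complex.reCLM.hasFDerivAt (x := (inner ℂ (P t) (P t) : ℂ))).comp_hasDerivAt t h1
    convert h2 using 1 <;> try rfl
    have hcj : (inner ℂ (M t * P t - P t * M t) (P t) : ℂ)
        = (starRingEnd ℂ) (inner ℂ (P t) (M t * P t - P t * M t) : ℂ) :=
      (inner_conj_symm _ _).symm
    simp only [hu', Function.comp, Complex.reCLM_apply, hcj, Complex.add_re, Complex.conj_re]
    ring
  have bound : ∀ t ∈ Set.Ico y x, ‖u' t‖ ≤ 4 * c * ‖u t‖ + 0 := by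
    intro t ht
    have ht0 : t ≤ 0 := le_of_lt (lt_of_lt_of_le ht.2 hx0)
    have hb := re_inner_bound' (P t) (M t) c (hRe t ht0)
    have : ‖u' t‖ ≤ 4 * c * ‖P t‖ ^ 2 := by
      rw [hu', Real.norm_eq_abs, abs_mul]
      calc |(2:ℝ)| * |Complex.re (inner ℂ (P t) (M t * P t - P t * M t) : ℂ)|
          ≤ 2 * (2 * c * ‖P t‖ ^ 2) := by
            rw [abs_two]
            exact mul_le_mul_of_nonneg_left hb (by norm_num)
        _ = 4 * c * ‖P t‖ ^ 2 := by ring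
    rw [add_zero]
    have : ‖u t‖ = ‖P t‖ ^ 2 := by
      rw [hunorm t, Real.norm_eq_abs, abs_of_nonneg (sq_nonneg _)]
    linarith [this ▸ ‹‖u' t‖ ≤ 4 * c * ‖P t‖ ^ 2›]
  have hcont : ContinuousOn u (Set.Icc y x) := fun t ht =>
    ((hderiv t (le_trans ht.2 hx0)).continuousAt).continuousWithinAt
  have hder' : ∀ t ∈ Set.Ico y x, HasDerivWithinAt u (u' t) (Set.Ici t) t := fun t ht =>
    (hderiv t (le_of_lt (lt_of_lt_of_le ht.2 hx0))).hasDerivWithinAt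
  have hay : ‖u y‖ ≤ u y := le_of_eq (by
    rw [hunorm y, Real.norm_eq_abs, abs_of_nonneg (sq_nonneg _)])
  have key := norm_le_gronwallBound_of_norm_deriv_right_le hcont hder' hay bound x
    ⟨hyx, le_refl x⟩
  rw [gronwallBound_ε0] at key
  have hkey2 : ‖P x‖ ^ 2 ≤ ‖P y‖ ^ 2 * Real.exp (4 * c * (x - y)) := by
    have h1 : u x ≤ ‖u x‖ := le_abs_self _
    calc ‖P x‖ ^ 2 = u x := (hunorm x).symm
      _ ≤ ‖u x‖ := h1
      _ ≤ u y * Real.exp (4 * c * (x - y)) := key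
      _ = ‖P y‖ ^ 2 * Real.exp (4 * c * (x - y)) := by rw [hunorm y]
  have hrhs : ‖P y‖ ^ 2 * Real.exp (4 * c * (x - y))
      = (‖P y‖ * Real.exp (2 * c * (x - y))) ^ 2 := by
    have he : Real.exp (2 * c * (x - y)) ^ 2 = Real.exp (4 * c * (x - y)) := by
      rw [pow_two, ← Real.exp_add]; congr 1; ring
    rw [mul_pow, he]
  rw [hrhs] at hkey2
  have := Real.sqrt_le_sqrt hkey2
  rw [Real.sqrt_sq (norm_nonneg _), Real.sqrt_sq (by positivity)] at this
  have hfin : 2 * ε * δ * (x - y) = 2 * c * (x - y) := by rw [hc]; ring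
  rw [hfin]
  exact this
end

section
/- Fix constants C, θ, ε > 0 with ε ≤ θ/4 in appropriate smallness regime. Suppose Θ : (-∞,0] → Matrix (Fin N) (Fin N) ℂ satisfies ‖Θ(x)‖ ≤ Cε² e^{-θε|x|}, and F : {(y,x) : y ≤ x ≤ 0} → Matrix (Fin N) (Fin N) ℂ is a family of bounded operators satisfying ‖F(y,x)‖ ≤ C e^{(θε/2)(x−y)}. Then the map T defined on bounded continuous matrix-valued functions Ψ on (-∞,0] by (TΨ)(x) = ∫_{-∞}^x F(y,x) · Θ(y) · (I + Ψ(y)) dy satisfies: for all Ψ₁, Ψ₂, ‖TΨ₁ − TΨ₂‖_{L∞(-∞,x]} ≤ C₁ ε e^{-θε|x|/2} ‖Ψ₁ − Ψ₂‖_∞ for some constant C₁ depending only on C, θ; in particular, for ε small enough T is a contraction on L∞((-∞,0]). -/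
open Matrix Real MeasureTheory

attribute [local instance] Matrix.frobeniusNormedAddCommGroup Matrix.frobeniusNormedRing
  Matrix.frobeniusNormedSpace

/-- Port helper: the `ContinuousENorm` induced by the Frobenius norm (instance search no longer
finds it through the local Frobenius instances). -/
noncomputable instance frobeniusContinuousENormPort {m n : Type*} [Fintype m] [Fintype n] :
    ContinuousENorm (Matrix m n ℂ) :=
  @SeminormedAddGroup.toContinuousENorm _
    (Matrix.frobeniusNormedAddCommGroup).toSeminormedAddCommGroup.toSeminormedAddGroup

lemma exp_mul_integrableOn_Iic {a : ℝ} (ha : 0 < a) (x : ℝ) :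
    IntegrableOn (fun y => Real.exp (a * y)) (Set.Iic x) := by
  refine integrableOn_Iic_of_intervalIntegral_norm_bounded (Real.exp (a * x) / a) x
    (fun y => ((Real.continuous_exp.comp (continuous_const.mul continuous_id)).intervalIntegrable _ _).1)
    Filter.tendsto_id (Filter.Eventually.of_forall fun y => ?_)
  simp only [id_eq]
  have h1 : (∫ t in y..x, ‖Real.exp (a * t)‖) = ∫ t in y..x, Real.exp (a * t) := by
    simp [Real.norm_eq_abs, abs_of_pos (Real.exp_pos _)]
  rw [h1, intervalIntegral.integral_comp_mul_left (fun t => Real.exp t) ha.ne',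
    integral_exp, smul_eq_mul, inv_mul_eq_div]
  gcongr
  exact sub_le_self _ (Real.exp_pos _).le

lemma integral_exp_mul_Iic' {a : ℝ} (ha : 0 < a) (x : ℝ) :
    (∫ y in Set.Iic x, Real.exp (a * y)) = Real.exp (a * x) / a := by
  have hd : ∀ y ∈ Set.Iio x, HasDerivAt (fun y => Real.exp (a * y) / a) (Real.exp (a * y)) y := by
    intro y _
    have := (((hasDerivAt_id y).const_mul a).exp).div_const a
    simpa [mul_comm, mul_div_assoc, mul_div_cancel_left₀ _ ha.ne'] using this
  have htend : Filter.Tendsto (fun y => Real.exp (a * y) / a) Filter.atBot (nhds 0) := by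
    have h1 : Filter.Tendsto (fun y : ℝ => a * y) Filter.atBot Filter.atBot :=
      Filter.tendsto_id.const_mul_atBot ha
    simpa using (Real.tendsto_exp_atBot.comp h1).div_const a
  have := integral_Iic_of_hasDerivAt_of_tendsto
    (f := fun y => Real.exp (a * y) / a) (f' := fun y => Real.exp (a * y))
    ((Real.continuous_exp.comp (continuous_const.mul continuous_id)).div_const a).continuousWithinAt
    hd (exp_mul_integrableOn_Iic ha x) htend
  simpa using this

/-- Contraction estimate for the fixed-point map of the
variable-coefficient conjugation lemma:
`(T Ψ)(x) = ∫_{-∞}^x F(y,x) Θ(y) (I + Ψ(y)) dy`. -/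
theorem conjugation_fixed_point_contraction
    (N : ℕ) (C θ : ℝ) (hC : 0 < C) (hθ : 0 < θ) :
    ∃ C₁ : ℝ, 0 < C₁ ∧ ∃ ε₀ : ℝ, 0 < ε₀ ∧
      ∀ ε : ℝ, 0 < ε → ε ≤ ε₀ → ε ≤ θ / 4 →
      ∀ (Θ : ℝ → Matrix (Fin N) (Fin N) ℂ)
        (F : ℝ → ℝ → Matrix (Fin N) (Fin N) ℂ),
        (∀ x : ℝ, x ≤ 0 → ‖Θ x‖ ≤ C * ε ^ 2 * Real.exp (-θ * ε * |x|)) →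
        (∀ y x : ℝ, y ≤ x → x ≤ 0 →
          ‖F y x‖ ≤ C * Real.exp (θ * ε / 2 * (x - y))) →
        ∀ (Ψ₁ Ψ₂ : ℝ → Matrix (Fin N) (Fin N) ℂ) (K : ℝ),
          (∀ y : ℝ, y ≤ 0 → ‖Ψ₁ y - Ψ₂ y‖ ≤ K) →
          (∀ x : ℝ, x ≤ 0 →
            IntegrableOn (fun y => F y x * (Θ y * (1 + Ψ₁ y))) (Set.Iic x)) →
          (∀ x : ℝ, x ≤ 0 →
            IntegrableOn (fun y => F y x * (Θ y * (1 + Ψ₂ y))) (Set.Iic x)) →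
          (∀ x : ℝ, x ≤ 0 →
            ‖(∫ y in Set.Iic x, F y x * (Θ y * (1 + Ψ₁ y))) -
              (∫ y in Set.Iic x, F y x * (Θ y * (1 + Ψ₂ y)))‖ ≤
              C₁ * ε * Real.exp (-θ * ε * |x| / 2) * K)
          ∧ C₁ * ε₀ < 1 / 2 := by
  refine ⟨2 * C ^ 2 / θ, by positivity, θ / (8 * C ^ 2), by positivity, ?_⟩
  intro ε hε hεε₀ hεθ Θ F hΘ hF Ψ₁ Ψ₂ K hK hI1 hI2
  have hK0 : 0 ≤ K := le_trans (norm_nonneg _) (hK 0 le_rfl)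
  constructor
  · intro x hx
    have ha : 0 < θ * ε / 2 := by positivity
    rw [← integral_sub (hI1 x hx) (hI2 x hx)]
    have hptw : ∀ y : ℝ, F y x * (Θ y * (1 + Ψ₁ y)) - F y x * (Θ y * (1 + Ψ₂ y))
        = F y x * (Θ y * (Ψ₁ y - Ψ₂ y)) := by
      intro y; noncomm_ring
    simp_rw [hptw]
    set g : ℝ → ℝ := fun y =>
      C ^ 2 * ε ^ 2 * K * Real.exp (θ * ε * x / 2) * Real.exp (θ * ε / 2 * y) with hg
    have hgint : Integrable g (volume.restrict (Set.Iic x)) :=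
      (exp_mul_integrableOn_Iic ha x).const_mul _
    have hbound : ∀ᵐ y ∂(volume.restrict (Set.Iic x)),
        ‖F y x * (Θ y * (Ψ₁ y - Ψ₂ y))‖ ≤ g y := by
      filter_upwards [ae_restrict_mem measurableSet_Iic] with y hy
      have hyx : y ≤ x := hy
      have hy0 : y ≤ 0 := hyx.trans hx
      have h1 : ‖F y x * (Θ y * (Ψ₁ y - Ψ₂ y))‖
          ≤ ‖F y x‖ * (‖Θ y‖ * ‖Ψ₁ y - Ψ₂ y‖) :=
        (norm_mul_le _ _).trans
          (mul_le_mul_of_nonneg_left (norm_mul_le _ _) (norm_nonneg _))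
      refine h1.trans ?_
      have hinner : ‖Θ y‖ * ‖Ψ₁ y - Ψ₂ y‖
          ≤ (C * ε ^ 2 * Real.exp (-θ * ε * |y|)) * K :=
        mul_le_mul (hΘ y hy0) (hK y hy0) (norm_nonneg _) (by positivity)
      have h2 : ‖F y x‖ * (‖Θ y‖ * ‖Ψ₁ y - Ψ₂ y‖)
          ≤ (C * Real.exp (θ * ε / 2 * (x - y))) *
            ((C * ε ^ 2 * Real.exp (-θ * ε * |y|)) * K) :=
        mul_le_mul (hF y x hyx hx) hinner
          (mul_nonneg (norm_nonneg _) (norm_nonneg _)) (by positivity)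
      refine h2.trans (le_of_eq ?_)
      rw [abs_of_nonpos hy0, hg]
      beta_reduce
      have he : Real.exp (θ * ε / 2 * (x - y)) * Real.exp (-θ * ε * -y)
          = Real.exp (θ * ε * x / 2) * Real.exp (θ * ε / 2 * y) := by
        rw [← Real.exp_add, ← Real.exp_add]; ring_nf
      linear_combination (C ^ 2 * ε ^ 2 * K) * he
    have h3 := norm_integral_le_of_norm_le hgint hbound
    refine h3.trans ?_
    rw [hg]
    rw [integral_const_mul, integral_exp_mul_Iic' ha x]
    rw [abs_of_nonpos hx]
    rw [show θ * ε / 2 * x = θ * ε * x / 2 by ring,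
      show -θ * ε * -x / 2 = θ * ε * x / 2 by ring]
    set E : ℝ := Real.exp (θ * ε * x / 2) with hE
    have hEpos : 0 < E := Real.exp_pos _
    have hE1 : E ≤ 1 := by
      rw [hE, Real.exp_le_one_iff]
      nlinarith [mul_pos hθ hε]
    have key : C ^ 2 * ε ^ 2 * K * E * (E / (θ * ε / 2))
        = 2 * C ^ 2 / θ * ε * K * (E * E) := by
      field_simp
    calc C ^ 2 * ε ^ 2 * K * E * (E / (θ * ε / 2))
        = 2 * C ^ 2 / θ * ε * K * (E * E) := key
      _ ≤ 2 * C ^ 2 / θ * ε * K * E :=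
          mul_le_mul_of_nonneg_left (mul_le_of_le_one_right hEpos.le hE1) (by positivity)
      _ = 2 * C ^ 2 / θ * ε * E * K := by ring
  · have hCne : (C : ℝ) ≠ 0 := hC.ne'
    have hθne : (θ : ℝ) ≠ 0 := hθ.ne'
    have : 2 * C ^ 2 / θ * (θ / (8 * C ^ 2)) = 1 / 4 := by
      field_simp; ring
    rw [this]; norm_num
end
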